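/- In the one-period market with d = 1, prices y ∈ L^0(ℝ, H) and Y ∈ L^0(ℝ, F), suppose AIP holds. Let g : ℝ → ℝ be a nonnegative convex function with dom g = ℝ and lim_{x→∞} g(x)/x = M ∈ [0, ∞). Then almost surely p(g) = g(essinf_H Y) + θ* ( y − essinf_H Y ), where θ* = ( g(esssup_H Y) − g(essinf_H Y) ) / ( esssup_H Y − essinf_H Y ), with the conventions θ* = 0 when esssup_H Y = essinf_H Y and θ* = M when essinf_H Y < esssup_H Y = +∞. Moreover p(g) ∈ P(g), i.e., the infimum super-hedging cost is itself a super-hedging price, attained by the strategy θ*. -/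

import Mathlib

open MeasureTheory Set Filter
open scoped Classical

noncomputable section

/-- Scalar product on `ℝ^d`. -/
def dotp {d : ℕ} (a b : Fin d → ℝ) : ℝ := ∑ i, a i * b i

/-- `κ` is a regular version of the conditional law of `X` knowing the σ-algebra `H`. -/
structure CondLaw {Ω : Type*} (H : MeasurableSpace Ω) {mΩ : MeasurableSpace Ω}
    (μ : Measure Ω) {E : Type*} [MeasurableSpace E] (X : Ω → E) (κ : Ω → Measure E) :
    Prop where
  isProb : ∀ ω, IsProbabilityMeasure (κ ω)
  meas : ∀ A : Set E, MeasurableSet A → Measurable[H] fun ω => κ ω A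
  law : ∀ A : Set E, MeasurableSet A → ∀ B : Set Ω, MeasurableSet[H] B →
    ∫⁻ ω in B, κ ω A ∂μ = μ (B ∩ X ⁻¹' A)

/-- The support of the measure `κ ω`: the intersection of all closed sets of full
measure (for a regular conditional law this is the conditional support). -/
def condSupp {Ω E : Type*} [TopologicalSpace E] [MeasurableSpace E]
    (κ : Ω → Measure E) (ω : Ω) : Set E :=
  ⋂₀ {A : Set E | IsClosed A ∧ κ ω A = 1}

/-- `γ` is (a version of) the conditional essential supremum of `X` knowing `H`. -/
def IsCondEssSup {Ω : Type*} (H : MeasurableSpace Ω) {mΩ : MeasurableSpace Ω}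
    (μ : Measure Ω) (X : Ω → ℝ) (γ : Ω → EReal) : Prop :=
  Measurable[H] γ ∧ (∀ᵐ ω ∂μ, (X ω : EReal) ≤ γ ω) ∧
    ∀ ζ : Ω → EReal, Measurable[H] ζ → (∀ᵐ ω ∂μ, (X ω : EReal) ≤ ζ ω) →
      ∀ᵐ ω ∂μ, γ ω ≤ ζ ω

/-- `γ` is (a version of) the conditional essential infimum of `X` knowing `H`. -/
def IsCondEssInf {Ω : Type*} (H : MeasurableSpace Ω) {mΩ : MeasurableSpace Ω}
    (μ : Measure Ω) (X : Ω → ℝ) (γ : Ω → EReal) : Prop :=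
  Measurable[H] γ ∧ (∀ᵐ ω ∂μ, γ ω ≤ (X ω : EReal)) ∧
    ∀ ζ : Ω → EReal, Measurable[H] ζ → (∀ᵐ ω ∂μ, ζ ω ≤ (X ω : EReal)) →
      ∀ᵐ ω ∂μ, ζ ω ≤ γ ω

/-- `p` is (a version of) the essential infimum of the family `S` of random variables. -/
def IsEssInfSet {Ω : Type*} {mΩ : MeasurableSpace Ω} (μ : Measure Ω)
    (S : Set (Ω → ℝ)) (p : Ω → EReal) : Prop :=
  Measurable[mΩ] p ∧ (∀ f ∈ S, ∀ᵐ ω ∂μ, p ω ≤ (f ω : EReal)) ∧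
    ∀ ζ : Ω → EReal, Measurable[mΩ] ζ → (∀ f ∈ S, ∀ᵐ ω ∂μ, ζ ω ≤ (f ω : EReal)) →
      ∀ᵐ ω ∂μ, ζ ω ≤ p ω

/-- The set of super-hedging prices of the claim `Z` in the one-period market `(y, Y)`. -/
def Prices {Ω : Type*} (H : MeasurableSpace Ω) {mΩ : MeasurableSpace Ω} (μ : Measure Ω)
    {d : ℕ} (y Y : Ω → Fin d → ℝ) (Z : Ω → ℝ) : Set (Ω → ℝ) :=
  {x | Measurable[H] x ∧ ∃ θ : Ω → Fin d → ℝ, Measurable[H] θ ∧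
    ∀ᵐ ω ∂μ, Z ω ≤ x ω + dotp (θ ω) fun i => Y ω i - y ω i}

/-- One-dimensional version of `Prices`. -/
def Prices1 {Ω : Type*} (H : MeasurableSpace Ω) {mΩ : MeasurableSpace Ω} (μ : Measure Ω)
    (y Y : Ω → ℝ) (Z : Ω → ℝ) : Set (Ω → ℝ) :=
  {x | Measurable[H] x ∧ ∃ θ : Ω → ℝ, Measurable[H] θ ∧
    ∀ᵐ ω ∂μ, Z ω ≤ x ω + θ ω * (Y ω - y ω)}

/-- One-period super-hedging prices of the zero claim in the market extended by the
additional asset `(pZ, Z)`. -/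
def PricesExt {Ω : Type*} (H : MeasurableSpace Ω) {mΩ : MeasurableSpace Ω} (μ : Measure Ω)
    {d : ℕ} (y Y : Ω → Fin d → ℝ) (Z pZ : Ω → ℝ) : Set (Ω → ℝ) :=
  {x | Measurable[H] x ∧ ∃ α : Ω → ℝ, Measurable[H] α ∧ ∃ θ : Ω → Fin d → ℝ,
    Measurable[H] θ ∧
    ∀ᵐ ω ∂μ, 0 ≤ x ω + α ω * (Z ω - pZ ω) + dotp (θ ω) fun i => Y ω i - y ω i}

/-- The function `f = -g + δ_{D}` of the paper, valued in `EReal`. -/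
def fObj {Ω : Type*} {d : ℕ} (g : Ω → (Fin d → ℝ) → ℝ) (D : Ω → Set (Fin d → ℝ))
    (ω : Ω) (z : Fin d → ℝ) : EReal :=
  if z ∈ D ω then ((-(g ω z) : ℝ) : EReal) else ⊤

/-- Fenchel–Legendre conjugate of an `EReal`-valued function on `ℝ^d`. -/
def eConj {d : ℕ} (f : (Fin d → ℝ) → EReal) (x : Fin d → ℝ) : EReal :=
  ⨆ z : Fin d → ℝ, ((dotp x z : ℝ) : EReal) - f z

/-- Convex-analytic indicator function `δ_s`. -/
def indicatorE {E : Type*} (s : Set E) (x : E) : EReal := if x ∈ s then 0 else ⊤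

/-- Relative concave envelope of `g` with respect to `D`. -/
def concEnv {d : ℕ} (g : (Fin d → ℝ) → ℝ) (D : Set (Fin d → ℝ)) (x : Fin d → ℝ) : EReal :=
  ⨅ v ∈ {v : (Fin d → ℝ) → ℝ | ConcaveOn ℝ univ v ∧ ∀ z ∈ D, g z ≤ v z}, ((v x : ℝ) : EReal)

/-- Upper semicontinuous closure of an `EReal`-valued function. -/
def usClosure {E : Type*} [TopologicalSpace E] (F : E → EReal) (x : E) : EReal :=
  Filter.limsup F (nhds x)

/-- The slope `θ^*` of Corollary 2.19, with the conventions of the paper. -/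
def thetaStar (g : ℝ → ℝ) (M I : ℝ) (S : EReal) : ℝ :=
  if S = (I : EReal) then 0 else if S = ⊤ then M
  else (g S.toReal - g I) / (S.toReal - I)

/-- Multi-period super-hedging prices at time `t` of the claim `g` paid at time `T`. -/
def PricesMulti {Ω : Type*} {mΩ : MeasurableSpace Ω} (𝓕 : ℕ → MeasurableSpace Ω)
    (μ : Measure Ω) {d : ℕ} (S : ℕ → Ω → Fin d → ℝ) (t T : ℕ) (g : Ω → ℝ) :
    Set (Ω → ℝ) :=
  {x | Measurable[𝓕 t] x ∧ ∃ θ : ℕ → Ω → Fin d → ℝ, (∀ u, Measurable[𝓕 u] (θ u)) ∧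
    ∃ ε : Ω → ℝ, Measurable[𝓕 T] ε ∧ (∀ᵐ ω ∂μ, 0 ≤ ε ω) ∧
    ∀ᵐ ω ∂μ, x ω + (∑ u ∈ Finset.Icc (t+1) T,
      dotp (θ (u-1) ω) fun i => S u ω i - S (u-1) ω i) - ε ω = g ω}

/-- One-step super-hedging prices at time `t` of the (extended-real) claim `G`
paid at time `t+1`. -/
def OneStepPrices {Ω : Type*} {mΩ : MeasurableSpace Ω} (𝓕 : ℕ → MeasurableSpace Ω)
    (μ : Measure Ω) {d : ℕ} (S : ℕ → Ω → Fin d → ℝ) (t : ℕ) (G : Ω → EReal) :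
    Set (Ω → ℝ) :=
  {x | Measurable[𝓕 t] x ∧ ∃ θ : Ω → Fin d → ℝ, Measurable[𝓕 t] θ ∧
    ∀ᵐ ω ∂μ, G ω ≤ ((x ω + dotp (θ ω) fun i => S (t+1) ω i - S t ω i : ℝ) : EReal)}

/-- Multi-period super-hedging prices in the market extended by the additional asset `C`. -/
def PricesMultiExt {Ω : Type*} {mΩ : MeasurableSpace Ω} (𝓕 : ℕ → MeasurableSpace Ω)
    (μ : Measure Ω) {d : ℕ} (S : ℕ → Ω → Fin d → ℝ) (C : ℕ → Ω → ℝ) (t T : ℕ)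
    (g : Ω → ℝ) : Set (Ω → ℝ) :=
  {x | Measurable[𝓕 t] x ∧ ∃ θ : ℕ → Ω → Fin d → ℝ, (∀ u, Measurable[𝓕 u] (θ u)) ∧
    ∃ α : ℕ → Ω → ℝ, (∀ u, Measurable[𝓕 u] (α u)) ∧
    ∃ ε : Ω → ℝ, Measurable[𝓕 T] ε ∧ (∀ᵐ ω ∂μ, 0 ≤ ε ω) ∧
    ∀ᵐ ω ∂μ, x ω + (∑ u ∈ Finset.Icc (t+1) T,
      ((dotp (θ (u-1) ω) fun i => S u ω i - S (u-1) ω i) +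
        α (u-1) ω * (C u ω - C (u-1) ω))) - ε ω = g ω}

/-- The set `R_t^T` of claims super-replicable at zero cost, one-dimensional case. -/
def RsetM {Ω : Type*} {mΩ : MeasurableSpace Ω} (𝓕 : ℕ → MeasurableSpace Ω)
    (μ : Measure Ω) (S : ℕ → Ω → ℝ) (t T : ℕ) : Set (Ω → ℝ) :=
  {X | ∃ θ : ℕ → Ω → ℝ, (∀ u, Measurable[𝓕 u] (θ u)) ∧
    ∃ ε : Ω → ℝ, Measurable[𝓕 T] ε ∧ (∀ᵐ ω ∂μ, 0 ≤ ε ω) ∧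
    ∀ᵐ ω ∂μ, X ω = (∑ u ∈ Finset.Icc (t+1) T, θ (u-1) ω * (S u ω - S (u-1) ω)) - ε ω}

/-- Closure with respect to convergence in probability. -/
def closureP {Ω : Type*} {mΩ : MeasurableSpace Ω} (μ : Measure Ω) (A : Set (Ω → ℝ)) :
    Set (Ω → ℝ) :=
  {X | ∃ f : ℕ → Ω → ℝ, (∀ n, f n ∈ A) ∧ TendstoInMeasure μ f Filter.atTop X}


lemma affine_sub_concave (g : ℝ → ℝ) (hg : ConvexOn ℝ Set.univ g) (c1 c2 : ℝ) :
    ConcaveOn ℝ Set.univ (fun t => c1 + c2 * t - g t) := by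
  constructor
  · exact convex_univ
  · intro p hp q hq a b ha hb hab
    have hgc := hg.2 (mem_univ p) (mem_univ q) ha hb hab
    simp only [smul_eq_mul] at hgc ⊢
    have h1 : a * c1 + b * c1 = c1 := by linear_combination c1 * hab
    nlinarith [hgc, h1]

lemma concave_nonneg_left {φ : ℝ → ℝ} (hconc : ConcaveOn ℝ Set.univ φ)
    (hcont : Continuous φ) {t v : ℝ} (htv : t ≤ v) (hv : 0 ≤ φ v)
    (Hyp : ∀ ε : ℝ, 0 < ε → ∃ u, u ≤ t + ε ∧ -ε ≤ φ u) : 0 ≤ φ t := by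
  rcases eq_or_lt_of_le htv with h | h
  · exact h ▸ hv
  · -- show φ s ≥ 0 for s ∈ (t, v]
    have hmid : ∀ s, t < s → s ≤ v → 0 ≤ φ s := by
      intro s hts hsv
      refine le_of_forall_pos_le_add ?_
      intro ε0 hε0
      set ε := min ε0 ((s - t) / 2) with hεdef
      have hε : 0 < ε := lt_min hε0 (by linarith)
      obtain ⟨u, hu1, hu2⟩ := Hyp ε hε
      have hus : u < s := by
        have : ε ≤ (s - t) / 2 := min_le_right _ _
        linarith
      have huv : u < v := lt_of_lt_of_le hus hsv
      set a := (v - s) / (v - u) with hadef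
      set b := (s - u) / (v - u) with hbdef
      have hvu : 0 < v - u := by linarith
      have ha : 0 ≤ a := div_nonneg (by linarith) hvu.le
      have hb : 0 ≤ b := div_nonneg (by linarith) hvu.le
      have hab : a + b = 1 := by
        rw [hadef, hbdef]; field_simp; ring
      have hpt : a * u + b * v = s := by
        rw [hadef, hbdef]; field_simp; ring
      have key := hconc.2 (mem_univ u) (mem_univ v) ha hb hab
      simp only [smul_eq_mul, hpt] at key
      have ha1 : a ≤ 1 := by nlinarith
      nlinarith [mul_nonneg ha (show 0 ≤ φ u + ε by linarith), mul_nonneg hb hv,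
        mul_nonneg (sub_nonneg.2 ha1) hε.le, min_le_left ε0 ((s - t) / 2), key]
    have htend : Tendsto φ (nhdsWithin t (Ioi t)) (nhds (φ t)) :=
      (hcont.continuousAt).continuousWithinAt
    refine ge_of_tendsto htend ?_
    filter_upwards [Ioc_mem_nhdsGT_of_mem (Set.left_mem_Ico.2 h)] with s hs
    exact hmid s hs.1 hs.2

lemma concave_nonneg_right {φ : ℝ → ℝ} (hconc : ConcaveOn ℝ Set.univ φ)
    (hcont : Continuous φ) {t v : ℝ} (hvt : v ≤ t) (hv : 0 ≤ φ v)
    (Hyp : ∀ ε : ℝ, 0 < ε → ∃ u, t - ε ≤ u ∧ -ε ≤ φ u) : 0 ≤ φ t := by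
  have hconc' : ConcaveOn ℝ Set.univ (fun s => φ (-s)) := by
    constructor
    · exact convex_univ
    · intro p hp q hq a b ha hb hab
      have := hconc.2 (mem_univ (-p)) (mem_univ (-q)) ha hb hab
      simp only [smul_eq_mul] at this ⊢
      convert this using 2
      ring
  have := concave_nonneg_left hconc' (hcont.comp continuous_neg)
      (t := -t) (v := -v) (by linarith) (by simpa using hv) ?_
  · simpa using this
  · intro ε hε
    obtain ⟨u, hu1, hu2⟩ := Hyp ε hε
    exact ⟨-u, by linarith, by simpa using hu2⟩

lemma secant_le_limit {g : ℝ → ℝ} (hg : ConvexOn ℝ Set.univ g) {M : ℝ}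
    (hlim : Tendsto (fun x => g x / x) atTop (nhds M)) {a t : ℝ} (hat : a < t) :
    g t ≤ g a + M * (t - a) := by
  have hsub : Tendsto (fun u : ℝ => u - a) atTop atTop :=
    tendsto_atTop_add_const_right _ (-a) tendsto_id
  have h3 : Tendsto (fun u : ℝ => g a / (u - a)) atTop (nhds 0) :=
    tendsto_const_nhds.div_atTop hsub
  have h2 : Tendsto (fun u : ℝ => u / (u - a)) atTop (nhds 1) := by
    have h4 : Tendsto (fun u : ℝ => a / (u - a)) atTop (nhds 0) :=
      tendsto_const_nhds.div_atTop hsub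
    have h5 : Tendsto (fun u : ℝ => 1 + a / (u - a)) atTop (nhds (1 + 0)) :=
      tendsto_const_nhds.add h4
    apply Tendsto.congr' ?_ (by simpa using h5)
    filter_upwards [eventually_gt_atTop a] with u hu
    have hne : u - a ≠ 0 := sub_ne_zero.2 hu.ne'
    field_simp; ring
  have hψ : Tendsto (fun u => (g u - g a) / (u - a)) atTop (nhds M) := by
    have h6 := (hlim.mul h2).sub h3
    apply Tendsto.congr' ?_ (by simpa using h6)
    filter_upwards [eventually_gt_atTop (max a 0)] with u hu
    have hua : u - a ≠ 0 := sub_ne_zero.2 (lt_of_le_of_lt (le_max_left a 0) hu).ne'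
    have hu0 : u ≠ 0 := (lt_of_le_of_lt (le_max_right a 0) hu).ne'
    field_simp
  have hle : (g t - g a) / (t - a) ≤ M := by
    refine ge_of_tendsto hψ ?_
    filter_upwards [eventually_ge_atTop t] with u hu
    exact hg.secant_mono (mem_univ a) (mem_univ t) (mem_univ u)
      (ne_of_gt hat) (ne_of_gt (lt_of_lt_of_le hat hu)) hu
  have hpos : 0 < t - a := sub_pos.2 hat
  have := (div_le_iff₀ hpos).1 hle
  linarith


def philow (f b yy : ℝ) (g : ℝ → ℝ) (t : ℝ) : ℝ := f + b * (t - yy) - g t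

def condL (f b yy : ℝ) (g : ℝ → ℝ) (q : ℚ) : Prop :=
  ∀ n : ℕ, ∃ r : ℚ, (r : ℝ) ≤ (q : ℝ) ∧ -(1 / (n + 1) : ℝ) ≤ philow f b yy g r

def condR (f b yy : ℝ) (g : ℝ → ℝ) (q : ℚ) : Prop :=
  ∀ n : ℕ, ∃ r : ℚ, (q : ℝ) ≤ (r : ℝ) ∧ -(1 / (n + 1) : ℝ) ≤ philow f b yy g r

def aELow (f b yy : ℝ) (g : ℝ → ℝ) : EReal :=
  ⨅ q : ℚ, if condL f b yy g q then (((q : ℝ) : EReal)) else ⊤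

def bEHigh (f b yy : ℝ) (g : ℝ → ℝ) : EReal :=
  ⨆ q : ℚ, if condR f b yy g q then (((q : ℝ) : EReal)) else ⊥

variable {f b yy : ℝ} {g : ℝ → ℝ}

lemma philow_cont (hg : Continuous g) : Continuous (philow f b yy g) := by
  unfold philow
  exact (continuous_const.add (continuous_const.mul ((continuous_id.sub continuous_const)))).sub hg

lemma philow_concave (hg : ConvexOn ℝ Set.univ g) :
    ConcaveOn ℝ Set.univ (philow f b yy g) := by
  have : philow f b yy g = fun t => (f - b * yy) + b * t - g t := by
    funext t; unfold philow; ring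
  rw [this]
  exact affine_sub_concave g hg _ _

-- if phi is continuous and nonneg at v, then every rational q with v < q satisfies condL
lemma condL_of_nonneg (hg : Continuous g) {v : ℝ} (hv : 0 ≤ philow f b yy g v)
    {q : ℚ} (hq : v < (q : ℝ)) : condL f b yy g q := by
  intro n
  have hε : (0:ℝ) < 1 / (n + 1) := by positivity
  have hc : ContinuousAt (philow f b yy g) v := (philow_cont hg).continuousAt
  rw [Metric.continuousAt_iff] at hc
  obtain ⟨δ, hδ, hd⟩ := hc _ hε
  obtain ⟨r, hr1, hr2⟩ := exists_rat_btwn (show max (v - δ) (v - 1) < v by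
    simp only [max_lt_iff]; constructor <;> linarith)
  refine ⟨r, le_of_lt (lt_trans hr2 hq), ?_⟩
  have h1 : max (v - δ) (v - 1) < (r:ℝ) := hr1
  have hdist : dist (r:ℝ) v < δ := by
    rw [Real.dist_eq, abs_lt]
    constructor
    · have := le_max_left (v - δ) (v - 1); linarith
    · linarith
  have := hd hdist
  rw [Real.dist_eq, abs_lt] at this
  linarith

lemma condR_of_nonneg (hg : Continuous g) {v : ℝ} (hv : 0 ≤ philow f b yy g v)
    {q : ℚ} (hq : (q : ℝ) < v) : condR f b yy g q := by
  intro n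
  have hε : (0:ℝ) < 1 / (n + 1) := by positivity
  have hc : ContinuousAt (philow f b yy g) v := (philow_cont hg).continuousAt
  rw [Metric.continuousAt_iff] at hc
  obtain ⟨δ, hδ, hd⟩ := hc _ hε
  obtain ⟨r, hr1, hr2⟩ := exists_rat_btwn (show v < min (v + δ) (v + 1) by
    simp only [lt_min_iff]; constructor <;> linarith)
  refine ⟨r, le_of_lt (lt_trans hq hr1), ?_⟩
  have h2 : (r:ℝ) < min (v + δ) (v + 1) := hr2
  have hdist : dist (r:ℝ) v < δ := by
    rw [Real.dist_eq, abs_lt]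
    constructor
    · linarith
    · have := min_le_left (v + δ) (v + 1); linarith
  have := hd hdist
  rw [Real.dist_eq, abs_lt] at this
  linarith

lemma aELow_le (hg : Continuous g) {v : ℝ} (hv : 0 ≤ philow f b yy g v) :
    aELow f b yy g ≤ ((v : ℝ) : EReal) := by
  refine le_of_forall_gt_imp_ge_of_dense ?_
  intro c hc
  obtain ⟨q, hq1, hq2⟩ := EReal.exists_rat_btwn_of_lt hc
  have hcond : condL f b yy g q := condL_of_nonneg hg hv (by exact_mod_cast hq1)
  calc aELow f b yy g ≤ _ := iInf_le _ q
    _ ≤ c := by rw [if_pos hcond]; exact hq2.le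

lemma le_bEHigh (hg : Continuous g) {v : ℝ} (hv : 0 ≤ philow f b yy g v) :
    ((v : ℝ) : EReal) ≤ bEHigh f b yy g := by
  refine le_of_forall_lt_imp_le_of_dense ?_
  intro c hc
  obtain ⟨q, hq1, hq2⟩ := EReal.exists_rat_btwn_of_lt hc
  have hcond : condR f b yy g q := condR_of_nonneg hg hv (by exact_mod_cast hq2)
  calc c ≤ _ := hq1.le
    _ ≤ bEHigh f b yy g := by
        refine le_trans ?_ (le_iSup _ q)
        rw [if_pos hcond]

lemma aELow_approx {t : ℝ} (h : aELow f b yy g ≤ ((t : ℝ) : EReal)) :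
    ∀ ε : ℝ, 0 < ε → ∃ u, u ≤ t + ε ∧ -ε ≤ philow f b yy g u := by
  intro ε hε
  have h2 : aELow f b yy g < ((t + ε : ℝ) : EReal) :=
    lt_of_le_of_lt h (by exact_mod_cast (lt_add_of_pos_right t hε))
  rw [aELow, iInf_lt_iff] at h2
  obtain ⟨q, hq⟩ := h2
  by_cases hcond : condL f b yy g q
  · rw [if_pos hcond] at hq
    have hqt : (q : ℝ) < t + ε := by exact_mod_cast hq
    obtain ⟨n, hn⟩ := exists_nat_one_div_lt hε
    obtain ⟨r, hr1, hr2⟩ := hcond n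
    exact ⟨r, le_trans hr1 hqt.le, le_trans (by linarith) hr2⟩
  · rw [if_neg hcond] at hq
    exact absurd hq (not_top_lt)

lemma bEHigh_approx {t : ℝ} (h : ((t : ℝ) : EReal) ≤ bEHigh f b yy g) :
    ∀ ε : ℝ, 0 < ε → ∃ u, t - ε ≤ u ∧ -ε ≤ philow f b yy g u := by
  intro ε hε
  have h2 : ((t - ε : ℝ) : EReal) < bEHigh f b yy g :=
    lt_of_lt_of_le (by exact_mod_cast (sub_lt_self t hε)) h
  rw [bEHigh, lt_iSup_iff] at h2
  obtain ⟨q, hq⟩ := h2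
  by_cases hcond : condR f b yy g q
  · rw [if_pos hcond] at hq
    have hqt : t - ε < (q : ℝ) := by exact_mod_cast hq
    obtain ⟨n, hn⟩ := exists_nat_one_div_lt hε
    obtain ⟨r, hr1, hr2⟩ := hcond n
    exact ⟨r, le_trans hqt.le hr1, le_trans (by linarith) hr2⟩
  · rw [if_neg hcond] at hq
    exact absurd hq (not_lt_bot)

lemma bEHigh_top (h : bEHigh f b yy g = ⊤) (c : ℝ) :
    ∃ u, c ≤ u ∧ -1 ≤ philow f b yy g u := by
  have h2 : ((c : ℝ) : EReal) < bEHigh f b yy g := h ▸ EReal.coe_lt_top c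
  rw [bEHigh, lt_iSup_iff] at h2
  obtain ⟨q, hq⟩ := h2
  by_cases hcond : condR f b yy g q
  · rw [if_pos hcond] at hq
    have hqc : c < (q : ℝ) := by exact_mod_cast hq
    obtain ⟨r, hr1, hr2⟩ := hcond 0
    refine ⟨r, le_trans hqc.le hr1, ?_⟩
    norm_num at hr2
    exact hr2
  · rw [if_neg hcond] at hq
    exact absurd hq (not_lt_bot)
lemma condL_measurable {Ω : Type*} {H : MeasurableSpace Ω} {f b yy : Ω → ℝ}
    (hf : Measurable[H] f) (hb : Measurable[H] b) (hy : Measurable[H] yy)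
    {g : ℝ → ℝ} (hg : Measurable g) (q : ℚ) :
    MeasurableSet[H] {ω | condL (f ω) (b ω) (yy ω) g q} := by
  have heq : {ω | condL (f ω) (b ω) (yy ω) g q} =
      ⋂ n : ℕ, ⋃ r : ℚ, ({ω | (r : ℝ) ≤ (q : ℝ)} ∩
        {ω | -(1 / (n + 1) : ℝ) ≤ philow (f ω) (b ω) (yy ω) g r}) := by
    ext ω
    simp only [condL, Set.mem_setOf_eq, Set.mem_iInter, Set.mem_iUnion, Set.mem_inter_iff]
  rw [heq]
  refine MeasurableSet.iInter fun n => MeasurableSet.iUnion fun r => ?_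
  refine (MeasurableSet.const _).inter ?_
  refine measurableSet_le measurable_const ?_
  have : (fun ω => philow (f ω) (b ω) (yy ω) g r) =
      fun ω => f ω + b ω * ((r : ℝ) - yy ω) - g r := by
    funext ω; simp [philow]
  rw [this]
  exact (hf.add (hb.mul (measurable_const.sub hy))).sub measurable_const

lemma condR_measurable {Ω : Type*} {H : MeasurableSpace Ω} {f b yy : Ω → ℝ}
    (hf : Measurable[H] f) (hb : Measurable[H] b) (hy : Measurable[H] yy)
    {g : ℝ → ℝ} (hg : Measurable g) (q : ℚ) :
    MeasurableSet[H] {ω | condR (f ω) (b ω) (yy ω) g q} := by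
  have heq : {ω | condR (f ω) (b ω) (yy ω) g q} =
      ⋂ n : ℕ, ⋃ r : ℚ, ({ω | (q : ℝ) ≤ (r : ℝ)} ∩
        {ω | -(1 / (n + 1) : ℝ) ≤ philow (f ω) (b ω) (yy ω) g r}) := by
    ext ω
    simp only [condR, Set.mem_setOf_eq, Set.mem_iInter, Set.mem_iUnion, Set.mem_inter_iff]
  rw [heq]
  refine MeasurableSet.iInter fun n => MeasurableSet.iUnion fun r => ?_
  refine (MeasurableSet.const _).inter ?_
  refine measurableSet_le measurable_const ?_
  have : (fun ω => philow (f ω) (b ω) (yy ω) g r) =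
      fun ω => f ω + b ω * ((r : ℝ) - yy ω) - g r := by
    funext ω; simp [philow]
  rw [this]
  exact (hf.add (hb.mul (measurable_const.sub hy))).sub measurable_const

lemma aELow_measurable {Ω : Type*} {H : MeasurableSpace Ω} {f b yy : Ω → ℝ}
    (hf : Measurable[H] f) (hb : Measurable[H] b) (hy : Measurable[H] yy)
    {g : ℝ → ℝ} (hg : Measurable g) :
    Measurable[H] (fun ω => aELow (f ω) (b ω) (yy ω) g) := by
  unfold aELow
  refine Measurable.iInf fun q => ?_
  exact Measurable.ite (condL_measurable hf hb hy hg q) measurable_const measurable_const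

lemma bEHigh_measurable {Ω : Type*} {H : MeasurableSpace Ω} {f b yy : Ω → ℝ}
    (hf : Measurable[H] f) (hb : Measurable[H] b) (hy : Measurable[H] yy)
    {g : ℝ → ℝ} (hg : Measurable g) :
    Measurable[H] (fun ω => bEHigh (f ω) (b ω) (yy ω) g) := by
  unfold bEHigh
  refine Measurable.iSup fun q => ?_
  exact Measurable.ite (condR_measurable hf hb hy hg q) measurable_const measurable_const
lemma key_aux {Ω : Type*} (H : MeasurableSpace Ω) [mΩ : MeasurableSpace Ω] (μ : Measure Ω)
    [IsProbabilityMeasure μ]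
    {y Y f b : Ω → ℝ} (hy : Measurable[H] y) (hf : Measurable[H] f) (hb : Measurable[H] b)
    {g : ℝ → ℝ} (hgconv : ConvexOn ℝ Set.univ g) (hgcont : Continuous g)
    {M : ℝ} (hlim : Tendsto (fun x => g x / x) atTop (nhds M))
    {I : Ω → ℝ} {S : Ω → EReal}
    (hI : IsCondEssInf H μ Y fun ω => ((I ω : ℝ) : EReal))
    (hS : IsCondEssSup H μ Y S)
    (hIy : ∀ᵐ ω ∂μ, I ω ≤ y ω) (hyS : ∀ᵐ ω ∂μ, ((y ω : ℝ) : EReal) ≤ S ω)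
    (hsuper : ∀ᵐ ω ∂μ, g (Y ω) ≤ f ω + b ω * (Y ω - y ω)) :
    ∀ᵐ ω ∂μ, g (I ω) + thetaStar g M (I ω) (S ω) * (y ω - I ω) ≤ f ω := by
  have haEY : ∀ᵐ ω ∂μ, aELow (f ω) (b ω) (y ω) g ≤ ((Y ω : ℝ) : EReal) := by
    filter_upwards [hsuper] with ω h
    refine aELow_le hgcont ?_
    simp only [philow]; linarith
  have haEI : ∀ᵐ ω ∂μ, aELow (f ω) (b ω) (y ω) g ≤ ((I ω : ℝ) : EReal) :=
    hI.2.2 _ (aELow_measurable hf hb hy hgcont.measurable) haEY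
  have hYbE : ∀ᵐ ω ∂μ, ((Y ω : ℝ) : EReal) ≤ bEHigh (f ω) (b ω) (y ω) g := by
    filter_upwards [hsuper] with ω h
    refine le_bEHigh hgcont ?_
    simp only [philow]; linarith
  have hSbE : ∀ᵐ ω ∂μ, S ω ≤ bEHigh (f ω) (b ω) (y ω) g :=
    hS.2.2 _ (bEHigh_measurable hf hb hy hgcont.measurable) hYbE
  filter_upwards [hsuper, haEI, hSbE, hI.2.1, hS.2.1, hIy, hyS]
    with ω h_sup h_aI h_Sb h_IY h_YS h_Iy h_yS
  have h_IY' : I ω ≤ Y ω := EReal.coe_le_coe_iff.1 h_IY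
  have hconc := philow_concave (f := f ω) (b := b ω) (yy := y ω) hgconv
  have hcont := philow_cont (f := f ω) (b := b ω) (yy := y ω) (g := g) hgcont
  have hsup0 : 0 ≤ philow (f ω) (b ω) (y ω) g (Y ω) := by
    simp only [philow]; linarith
  have hphiI : 0 ≤ philow (f ω) (b ω) (y ω) g (I ω) :=
    concave_nonneg_left hconc hcont h_IY' hsup0 (aELow_approx h_aI)
  simp only [philow] at hphiI
  by_cases hSI : S ω = ((I ω : ℝ) : EReal)
  · have hyI : y ω = I ω := le_antisymm (EReal.coe_le_coe_iff.1 (hSI ▸ h_yS)) h_Iy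
    have hts : thetaStar g M (I ω) (S ω) = 0 := by simp [thetaStar, hSI]
    rw [hts]
    rw [hyI] at hphiI
    simp only [sub_self, mul_zero, zero_mul, add_zero] at hphiI ⊢
    linarith
  by_cases hStop : S ω = ⊤
  · have hts : thetaStar g M (I ω) (S ω) = M := by simp [thetaStar, hSI, hStop]
    rw [hts]
    have hbEtop : bEHigh (f ω) (b ω) (y ω) g = ⊤ := top_le_iff.1 (hStop ▸ h_Sb)
    have hMb : M ≤ b ω := by
      choose u hu1 hu2 using fun n : ℕ => bEHigh_top hbEtop (n : ℝ)
      have hutop : Tendsto u atTop atTop :=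
        tendsto_atTop_mono hu1 tendsto_natCast_atTop_atTop
      have h1 : Tendsto (fun n => g (u n) / u n) atTop (nhds M) := hlim.comp hutop
      have h2 : Tendsto (fun n => (f ω + 1 - b ω * y ω) / u n + b ω) atTop
          (nhds (0 + b ω)) := (tendsto_const_nhds.div_atTop hutop).add tendsto_const_nhds
      have hle : (fun n => g (u n) / u n) ≤ᶠ[atTop]
          fun n => (f ω + 1 - b ω * y ω) / u n + b ω := by
        filter_upwards [hutop.eventually (eventually_gt_atTop 0)] with n hn
        have h3 := hu2 n
        simp only [philow] at h3
        have hexp : b ω * (u n - y ω) = b ω * u n - b ω * y ω := by ring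
        rw [hexp] at h3
        have h4 : g (u n) ≤ (f ω + 1 - b ω * y ω) + b ω * u n := by linarith
        have h5 : ((f ω + 1 - b ω * y ω) + b ω * u n) / u n
            = (f ω + 1 - b ω * y ω) / u n + b ω := by
          rw [add_div, mul_div_assoc, div_self (ne_of_gt hn), mul_one]
        rw [← h5]
        exact div_le_div_of_nonneg_right h4 hn.le
      exact le_of_tendsto_of_tendsto h1 (by simpa using h2) hle
    nlinarith [mul_le_mul_of_nonneg_right hMb (sub_nonneg.2 h_Iy)]
  · have hSbot : S ω ≠ ⊥ := ne_of_gt (lt_of_lt_of_le (EReal.bot_lt_coe _) h_YS)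
    have hscoe : (((S ω).toReal : ℝ) : EReal) = S ω := EReal.coe_toReal hStop hSbot
    have hYs : Y ω ≤ (S ω).toReal := EReal.coe_le_coe_iff.1 (by rw [hscoe]; exact h_YS)
    have hys : y ω ≤ (S ω).toReal := EReal.coe_le_coe_iff.1 (by rw [hscoe]; exact h_yS)
    have hsI : I ω < (S ω).toReal :=
      lt_of_le_of_ne (h_IY'.trans hYs) fun h => hSI (by rw [← hscoe, ← h])
    have hphis : 0 ≤ philow (f ω) (b ω) (y ω) g (S ω).toReal :=
      concave_nonneg_right hconc hcont hYs hsup0 (bEHigh_approx (by rw [hscoe]; exact h_Sb))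
    simp only [philow] at hphis
    have hts : thetaStar g M (I ω) (S ω) = (g (S ω).toReal - g (I ω)) / ((S ω).toReal - I ω) := by
      simp [thetaStar, hSI, hStop]
    rw [hts]
    have hpos : (0:ℝ) < (S ω).toReal - I ω := sub_pos.2 hsI
    have h7 : (g (S ω).toReal - g (I ω)) * (y ω - I ω)
        ≤ (f ω - g (I ω)) * ((S ω).toReal - I ω) := by
      nlinarith [mul_nonneg (sub_nonneg.2 hys) hphiI, mul_nonneg (sub_nonneg.2 h_Iy) hphis]
    have h9 := (div_le_iff₀ hpos).2 h7
    have h8 : (g (S ω).toReal - g (I ω)) / ((S ω).toReal - I ω) * (y ω - I ω)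
        = (g (S ω).toReal - g (I ω)) * (y ω - I ω) / ((S ω).toReal - I ω) := by ring
    rw [h8]
    linarith

/-- under AIP, for `d = 1` and a nonnegative convex payoff function `g`
with `lim_{x→∞} g(x)/x = M < ∞`, the infimum super-hedging cost is
`g(essinf_H Y) + θ^* (y - essinf_H Y)` and it is itself a super-hedging price,
attained by the strategy `θ^*`. -/
theorem superhedging_cost_convex_payoff_dim_one
    {Ω : Type*} (H : MeasurableSpace Ω) [mΩ : MeasurableSpace Ω] (μ : Measure Ω)
    [IsProbabilityMeasure μ] [μ.IsComplete] (hHF : H ≤ mΩ)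
    (hHcomp : ∀ s : Set Ω, μ s = 0 → MeasurableSet[H] s)
    (y Y : Ω → ℝ) (hy : Measurable[H] y) (hY : Measurable[mΩ] Y)
    (hy0 : ∀ ω, 0 ≤ y ω) (hY0 : ∀ ω, 0 ≤ Y ω)
    (p0 : Ω → EReal)
    (hp0 : IsEssInfSet μ (Prices1 H μ y Y fun _ => (0:ℝ)) p0)
    (hAIP : p0 =ᵐ[μ] fun _ => (0:EReal))
    (g : ℝ → ℝ) (hgconv : ConvexOn ℝ Set.univ g) (hg0 : ∀ x, 0 ≤ g x)
    (M : ℝ) (hM : 0 ≤ M) (hlim : Tendsto (fun x => g x / x) atTop (nhds M))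
    (I : Ω → ℝ) (hImeas : Measurable[H] I)
    (hI : IsCondEssInf H μ Y fun ω => ((I ω : ℝ) : EReal))
    (S : Ω → EReal) (hS : IsCondEssSup H μ Y S)
    (pg : Ω → EReal)
    (hpg : IsEssInfSet μ (Prices1 H μ y Y fun ω => g (Y ω)) pg) :
    (∀ᵐ ω ∂μ,
      pg ω = ((g (I ω) + thetaStar g M (I ω) (S ω) * (y ω - I ω) : ℝ) : EReal)) ∧
    (fun ω => g (I ω) + thetaStar g M (I ω) (S ω) * (y ω - I ω)) ∈
      Prices1 H μ y Y (fun ω => g (Y ω)) ∧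
    ∀ᵐ ω ∂μ, g (Y ω) ≤ (g (I ω) + thetaStar g M (I ω) (S ω) * (y ω - I ω))
        + thetaStar g M (I ω) (S ω) * (Y ω - y ω) := by
  classical
  have hgcont : Continuous g := by
    exact continuousOn_univ.1 (ConvexOn.continuousOn isOpen_univ hgconv)
  -- AIP consequence 1 : I ≤ y a.e.
  have hIy : ∀ᵐ ω ∂μ, I ω ≤ y ω := by
    have hmem : (fun ω => min (y ω - I ω) 0) ∈ Prices1 H μ y Y (fun _ => (0:ℝ)) := by
      refine ⟨(hy.sub hImeas).min measurable_const,
        fun ω => if y ω < I ω then 1 else 0,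
        Measurable.ite (measurableSet_lt hy hImeas) measurable_const measurable_const, ?_⟩
      filter_upwards [hI.2.1] with ω hIY
      have hIY' : I ω ≤ Y ω := EReal.coe_le_coe_iff.1 hIY
      by_cases h : y ω < I ω
      · rw [if_pos h, min_eq_left (by linarith : y ω - I ω ≤ 0)]
        simp only [one_mul]
        linarith
      · rw [if_neg h, min_eq_right (by linarith [not_lt.1 h] : (0:ℝ) ≤ y ω - I ω)]
        simp only [zero_mul, add_zero]
        exact le_refl 0
    filter_upwards [hp0.2.1 _ hmem, hAIP] with ω h1 h2
    rw [h2] at h1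
    have h3 : (0:ℝ) ≤ min (y ω - I ω) 0 := by exact_mod_cast h1
    have := min_le_left (y ω - I ω) 0
    linarith
  -- AIP consequence 2 : y ≤ S a.e.
  have hyS : ∀ᵐ ω ∂μ, ((y ω : ℝ) : EReal) ≤ S ω := by
    have hsetA : MeasurableSet[H] {ω | ((y ω : ℝ) : EReal) ≤ S ω} :=
      measurableSet_le (measurable_coe_real_ereal.comp hy) hS.1
    have hmem : (fun ω => if ((y ω : ℝ) : EReal) ≤ S ω then 0 else (S ω).toReal - y ω)
        ∈ Prices1 H μ y Y (fun _ => (0:ℝ)) := by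
      refine ⟨Measurable.ite hsetA measurable_const
        ((measurable_ereal_toReal.comp hS.1).sub hy),
        fun ω => if ((y ω : ℝ) : EReal) ≤ S ω then 0 else (-1 : ℝ),
        Measurable.ite hsetA measurable_const measurable_const, ?_⟩
      filter_upwards [hS.2.1] with ω hYS
      by_cases h : ((y ω : ℝ) : EReal) ≤ S ω
      · rw [if_pos h, if_pos h]
        simp only [zero_mul, add_zero]
        exact le_refl 0
      · rw [if_neg h, if_neg h]
        have hlt : S ω < ((y ω : ℝ) : EReal) := not_le.1 h
        have hSbot : S ω ≠ ⊥ := ne_of_gt (lt_of_lt_of_le (EReal.bot_lt_coe _) hYS)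
        have hStop : S ω ≠ ⊤ := ne_top_of_lt (lt_trans hlt (EReal.coe_lt_top _))
        have hscoe : (((S ω).toReal : ℝ) : EReal) = S ω := EReal.coe_toReal hStop hSbot
        have hYs : Y ω ≤ (S ω).toReal := EReal.coe_le_coe_iff.1 (by rw [hscoe]; exact hYS)
        have : (0:ℝ) ≤ ((S ω).toReal - y ω) + (-1) * (Y ω - y ω) := by linarith
        exact this
    filter_upwards [hp0.2.1 _ hmem, hAIP, hS.2.1] with ω h1 h2 hYS
    by_contra h
    rw [h2, if_neg h] at h1
    have h3 : (0:ℝ) ≤ (S ω).toReal - y ω := by exact_mod_cast h1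
    have hlt : S ω < ((y ω : ℝ) : EReal) := not_le.1 h
    have hSbot : S ω ≠ ⊥ := ne_of_gt (lt_of_lt_of_le (EReal.bot_lt_coe _) hYS)
    have hStop : S ω ≠ ⊤ := ne_top_of_lt (lt_trans hlt (EReal.coe_lt_top _))
    have hscoe : (((S ω).toReal : ℝ) : EReal) = S ω := EReal.coe_toReal hStop hSbot
    have : ((y ω : ℝ) : EReal) ≤ S ω := by
      rw [← hscoe]
      exact EReal.coe_le_coe_iff.2 (by linarith)
    exact h this
  -- measurability of θ* and x*
  have hcoeI : Measurable[H] fun ω => ((I ω : ℝ) : EReal) :=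
    measurable_coe_real_ereal.comp hImeas
  have hθmeas : Measurable[H] fun ω => thetaStar g M (I ω) (S ω) := by
    unfold thetaStar
    have h1 : MeasurableSet[H] {ω | S ω = ((I ω : ℝ) : EReal)} := by
      have heq : {ω | S ω = ((I ω : ℝ) : EReal)}
          = {ω | S ω ≤ ((I ω : ℝ) : EReal)} ∩ {ω | ((I ω : ℝ) : EReal) ≤ S ω} := by
        ext ω; simp [le_antisymm_iff]
      rw [heq]
      exact (measurableSet_le hS.1 hcoeI).inter (measurableSet_le hcoeI hS.1)
    have h2 : MeasurableSet[H] {ω | S ω = ⊤} := hS.1 (measurableSet_singleton ⊤)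
    have h3 : Measurable[H] fun ω =>
        (g (S ω).toReal - g (I ω)) / ((S ω).toReal - I ω) :=
      ((hgcont.measurable.comp (measurable_ereal_toReal.comp hS.1)).sub
        (hgcont.measurable.comp hImeas)).div
        ((measurable_ereal_toReal.comp hS.1).sub hImeas)
    exact Measurable.ite h1 measurable_const
      (Measurable.ite h2 measurable_const h3)
  have hxsmeas : Measurable[H] fun ω =>
      g (I ω) + thetaStar g M (I ω) (S ω) * (y ω - I ω) :=
    (hgcont.measurable.comp hImeas).add (hθmeas.mul (hy.sub hImeas))
  -- part 3 : the candidate is a super-hedging strategy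
  have h3 : ∀ᵐ ω ∂μ, g (Y ω) ≤ (g (I ω) + thetaStar g M (I ω) (S ω) * (y ω - I ω))
      + thetaStar g M (I ω) (S ω) * (Y ω - y ω) := by
    filter_upwards [hI.2.1, hS.2.1] with ω hIY hYS
    have hIY' : I ω ≤ Y ω := EReal.coe_le_coe_iff.1 hIY
    have hred : ∀ θ : ℝ, g (Y ω) ≤ g (I ω) + θ * (Y ω - I ω) →
        g (Y ω) ≤ (g (I ω) + θ * (y ω - I ω)) + θ * (Y ω - y ω) := by
      intro θ h
      have he : (g (I ω) + θ * (y ω - I ω)) + θ * (Y ω - y ω)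
          = g (I ω) + θ * (Y ω - I ω) := by ring
      rw [he]; exact h
    refine hred _ ?_
    by_cases hSI : S ω = ((I ω : ℝ) : EReal)
    · have hts : thetaStar g M (I ω) (S ω) = 0 := by simp [thetaStar, hSI]
      have hYI : Y ω = I ω := le_antisymm (EReal.coe_le_coe_iff.1 (hSI ▸ hYS)) hIY'
      rw [hts, hYI]; simp
    by_cases hStop : S ω = ⊤
    · have hts : thetaStar g M (I ω) (S ω) = M := by simp [thetaStar, hSI, hStop]
      rw [hts]
      rcases eq_or_lt_of_le hIY' with h | h
      · rw [← h]; simp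
      · linarith [secant_le_limit hgconv hlim h]
    · have hSbot : S ω ≠ ⊥ := ne_of_gt (lt_of_lt_of_le (EReal.bot_lt_coe _) hYS)
      have hscoe : (((S ω).toReal : ℝ) : EReal) = S ω := EReal.coe_toReal hStop hSbot
      have hYs : Y ω ≤ (S ω).toReal := EReal.coe_le_coe_iff.1 (by rw [hscoe]; exact hYS)
      have hsI : I ω < (S ω).toReal :=
        lt_of_le_of_ne (hIY'.trans hYs) fun h => hSI (by rw [← hscoe, ← h])
      have hts : thetaStar g M (I ω) (S ω)
          = (g (S ω).toReal - g (I ω)) / ((S ω).toReal - I ω) := by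
        simp [thetaStar, hSI, hStop]
      rw [hts]
      rcases eq_or_lt_of_le hIY' with h | h
      · rw [← h]; simp
      · have hsec := hgconv.secant_mono (Set.mem_univ (I ω)) (Set.mem_univ (Y ω))
          (Set.mem_univ (S ω).toReal) (ne_of_gt h) (ne_of_gt hsI) hYs
        have hpos : (0:ℝ) < Y ω - I ω := sub_pos.2 h
        have h4 := (div_le_iff₀ hpos).1 hsec
        linarith
  -- part 2 : membership
  have h2 : (fun ω => g (I ω) + thetaStar g M (I ω) (S ω) * (y ω - I ω))
      ∈ Prices1 H μ y Y (fun ω => g (Y ω)) :=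
    ⟨hxsmeas, fun ω => thetaStar g M (I ω) (S ω), hθmeas, h3⟩
  -- lower bound : every price dominates the candidate
  have hlowall : ∀ x' ∈ Prices1 H μ y Y (fun ω => g (Y ω)), ∀ᵐ ω ∂μ,
      ((g (I ω) + thetaStar g M (I ω) (S ω) * (y ω - I ω) : ℝ) : EReal)
        ≤ ((x' ω : ℝ) : EReal) := by
    rintro x' ⟨hx'meas, bθ, hbθmeas, hsuper⟩
    filter_upwards [key_aux H μ hy hx'meas hbθmeas hgconv hgcont hlim hI hS hIy hyS hsuper]
      with ω h
    exact EReal.coe_le_coe_iff.2 h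
  have hζmeas : Measurable[mΩ] fun ω =>
      ((g (I ω) + thetaStar g M (I ω) (S ω) * (y ω - I ω) : ℝ) : EReal) :=
    measurable_coe_real_ereal.comp (hxsmeas.mono hHF le_rfl)
  have hlow := hpg.2.2 _ hζmeas hlowall
  have hup := hpg.2.1 _ h2
  refine ⟨?_, h2, h3⟩
  filter_upwards [hlow, hup] with ω ha hb
  exact le_antisymm hb ha
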